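/- arXiv:1708.05408 — 4 statements merged into one kernel-verified Lean document; each statement's English description precedes it below -/
import Mathlib

section
/- For k ≥ 3, the subgraph of the grid Pk □ Pk induced by the vertex set (A(1) ∪ A(2)) ∪ (B(1) ∪ B(2)) (the union of the first two rows and first two columns) is weakly 2-linked. -/
open SimpleGraph

/-- The grid graph `Pm □ Pk` (0-indexed coordinates): `(i,j)` and `(p,q)` are
adjacent iff `|i-p| + |j-q| = 1`. -/
def grid (m k : ℕ) : SimpleGraph (Fin m × Fin k) where
  Adj u v := ((u.1 : ℤ) - v.1).natAbs + ((u.2 : ℤ) - v.2).natAbs = 1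
  symm := ⟨by intro u v h; omega⟩
  loopless := ⟨by intro u h; simp at h⟩

/-- A graph is weakly 2-linked if any two terminal pairs can be joined by
edge-disjoint paths. -/
def Weakly2Linked {V : Type*} (G : SimpleGraph V) : Prop :=
  ∀ u1 v1 u2 v2 : V, ∃ (p : G.Walk u1 v1) (q : G.Walk u2 v2),
    p.IsPath ∧ q.IsPath ∧ p.edges.Disjoint q.edges

abbrev SS (k : ℕ) : Set (Fin k × Fin k) := {v : Fin k × Fin k | v.1.val ≤ 1 ∨ v.2.val ≤ 1}

abbrev GG (k : ℕ) : SimpleGraph (SS k) := (grid k k).induce (SS k)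

variable {k : ℕ}

def vtx (hk : 3 ≤ k) (x : ℕ) : SS k :=
  if h1 : x ≤ k - 1 then ⟨(⟨0, by omega⟩, ⟨k - 1 - x, by omega⟩), Or.inl (by norm_num)⟩
  else if h2 : x ≤ 2*k - 2 then ⟨(⟨x - (k-1), by omega⟩, ⟨0, by omega⟩), Or.inr (by norm_num)⟩
  else if h3 : x ≤ 3*k - 3 then ⟨(⟨3*k - 2 - x, by omega⟩, ⟨1, by omega⟩), Or.inr (by norm_num)⟩
  else if h4 : x ≤ 4*k - 5 then ⟨(⟨1, by omega⟩, ⟨x - (3*k - 4), by omega⟩), Or.inl (by norm_num)⟩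
  else ⟨(⟨0, by omega⟩, ⟨0, by omega⟩), Or.inl (by norm_num)⟩

lemma vtx_inj (hk : 3 ≤ k) {x y : ℕ} (hx : x ≤ 4*k-5) (hy : y ≤ 4*k-5)
    (h : vtx hk x = vtx hk y) : x = y := by
  unfold vtx at h
  split_ifs at h <;>
    simp only [Subtype.mk.injEq, Prod.mk.injEq, Fin.mk.injEq] at h <;> omega

lemma adj_step (hk : 3 ≤ k) (x : ℕ) (hx : x < 4*k - 5) :
    (GG k).Adj (vtx hk x) (vtx hk (x+1)) := by
  show (grid k k).Adj (vtx hk x).1 (vtx hk (x+1)).1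
  unfold vtx
  show (_ : ℤ).natAbs + (_ : ℤ).natAbs = 1
  split_ifs <;> simp <;> omega

/-- bottom end of the channel at top position x -/
def bet (k x : ℕ) : ℕ := if x ≤ k - 2 then 4*k - 5 - x else 4*k - 3 - x

lemma adj_chan (hk : 3 ≤ k) (x : ℕ) (hx : x ≤ 2*k - 2) (hne : x ≠ k - 1) :
    (GG k).Adj (vtx hk x) (vtx hk (bet k x)) := by
  show (grid k k).Adj (vtx hk x).1 (vtx hk (bet k x)).1
  unfold vtx bet
  show (_ : ℤ).natAbs + (_ : ℤ).natAbs = 1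
  split_ifs <;> simp <;> omega

/-- the edge between consecutive positions -/
def gedge (hk : 3 ≤ k) (i : ℕ) : Sym2 (SS k) := s(vtx hk i, vtx hk (i+1))

/-- the channel edge at top position x -/
def cedge (hk : 3 ≤ k) (x : ℕ) : Sym2 (SS k) := s(vtx hk x, vtx hk (bet k x))

lemma gedge_inj (hk : 3 ≤ k) {i j : ℕ} (hi : i < 4*k-5) (hj : j < 4*k-5)
    (h : gedge hk i = gedge hk j) : i = j := by
  rw [gedge, gedge, Sym2.eq_iff] at h
  rcases h with ⟨h1, h2⟩ | ⟨h1, h2⟩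
  · exact vtx_inj hk (by omega) (by omega) h1
  · have := vtx_inj hk (by omega) (by omega) h1
    have := vtx_inj hk (by omega) (by omega) h2
    omega

lemma cedge_inj (hk : 3 ≤ k) {x y : ℕ} (hx : x ≤ 2*k-2) (hy : y ≤ 2*k-2)
    (h : cedge hk x = cedge hk y) : x = y := by
  have hbx : bet k x ≤ 4*k-5 ∧ 2*k-1 ≤ bet k x := by unfold bet; split_ifs <;> omega
  have hby : bet k y ≤ 4*k-5 ∧ 2*k-1 ≤ bet k y := by unfold bet; split_ifs <;> omega
  rw [cedge, cedge, Sym2.eq_iff] at h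
  rcases h with ⟨h1, h2⟩ | ⟨h1, h2⟩
  · exact vtx_inj hk (by omega) (by omega) h1
  · have := vtx_inj hk (by omega) (by omega) h1
    have := vtx_inj hk (by omega) (by omega) h2
    omega

lemma cedge_eq_gedge (hk : 3 ≤ k) {x i : ℕ} (hx : x ≤ 2*k-2) (hne : x ≠ k-1)
    (hi : i < 4*k-5) (h : cedge hk x = gedge hk i) : x = 2*k-2 ∧ i = 2*k-2 := by
  have hbx : bet k x ≤ 4*k-5 ∧ 2*k-1 ≤ bet k x := by unfold bet; split_ifs <;> omega
  rw [cedge, gedge, Sym2.eq_iff] at h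
  have hb : bet k x = (if x ≤ k - 2 then 4*k - 5 - x else 4*k - 3 - x) := rfl
  rcases h with ⟨h1, h2⟩ | ⟨h1, h2⟩ <;>
  · have e1 := vtx_inj hk (by omega) (by omega) h1
    have e2 := vtx_inj hk (by omega) (by omega) h2
    split_ifs at hb <;> omega

open SimpleGraph.Walk in
def arcN (hk : 3 ≤ k) (x : ℕ) : (n : ℕ) → (h : x + n ≤ 4*k-5) → (GG k).Walk (vtx hk x) (vtx hk (x+n))
  | 0, _ => Walk.nil.copy rfl (by norm_num)
  | n+1, h => (arcN hk x n (by omega)).concat (adj_step hk (x+n) (by omega))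

lemma mem_arcN (hk : 3 ≤ k) (x : ℕ) (n : ℕ) (h : x + n ≤ 4*k-5) :
    ∀ e ∈ (arcN hk x n h).edges, ∃ i, x ≤ i ∧ i < x + n ∧ e = gedge hk i := by
  induction n with
  | zero => simp [arcN]
  | succ n ih =>
    intro e he
    rw [arcN, Walk.edges_concat, List.concat_eq_append, List.mem_append, List.mem_singleton] at he
    rcases he with he | he
    · obtain ⟨i, h1, h2, h3⟩ := ih (by omega) e he
      exact ⟨i, by omega, by omega, h3⟩
    · exact ⟨x + n, by omega, by omega, by simpa [gedge, Nat.add_assoc] using he⟩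

/-- walk between arbitrary positions along the cycle-rail (no wrap) -/
def biArc (hk : 3 ≤ k) (x y : ℕ) (hx : x ≤ 4*k-5) (hy : y ≤ 4*k-5) :
    (GG k).Walk (vtx hk x) (vtx hk y) :=
  if h : x ≤ y then (arcN hk x (y - x) (by omega)).copy rfl (by congr 1; omega)
  else ((arcN hk y (x - y) (by omega)).copy rfl (by congr 1; omega)).reverse

lemma mem_biArc (hk : 3 ≤ k) {x y : ℕ} (hx : x ≤ 4*k-5) (hy : y ≤ 4*k-5) :
    ∀ e ∈ (biArc hk x y hx hy).edges, ∃ i, min x y ≤ i ∧ i < max x y ∧ e = gedge hk i := by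
  intro e he
  unfold biArc at he
  split_ifs at he with h
  · rw [Walk.edges_copy] at he
    obtain ⟨i, h1, h2, h3⟩ := mem_arcN hk x (y-x) (by omega) e he
    exact ⟨i, by omega, by omega, h3⟩
  · rw [Walk.edges_reverse, List.mem_reverse, Walk.edges_copy] at he
    obtain ⟨i, h1, h2, h3⟩ := mem_arcN hk y (x-y) (by omega) e he
    exact ⟨i, by omega, by omega, h3⟩

/-- channel walk (single edge) from top position x down -/
def chanW (hk : 3 ≤ k) (x : ℕ) (hx : x ≤ 2*k-2) (hne : x ≠ k-1) :
    (GG k).Walk (vtx hk x) (vtx hk (bet k x)) :=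
  Walk.cons (adj_chan hk x hx hne) Walk.nil

lemma mem_chanW (hk : 3 ≤ k) {x : ℕ} (hx : x ≤ 2*k-2) (hne : x ≠ k-1) :
    ∀ e ∈ (chanW hk x hx hne).edges, e = cedge hk x := by
  intro e he
  simp only [chanW, Walk.edges_cons, Walk.edges_nil, List.mem_singleton] at he
  exact he

lemma exists_pos (hk : 3 ≤ k) (v : SS k) : ∃ x, x ≤ 4*k-5 ∧ vtx hk x = v := by
  obtain ⟨⟨i, j⟩, hv⟩ := v
  have hmem : (i : ℕ) ≤ 1 ∨ (j : ℕ) ≤ 1 := hv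
  have hi : (i:ℕ) < k := i.2
  have hj : (j:ℕ) < k := j.2
  by_cases h0 : (i:ℕ) = 0
  · refine ⟨k - 1 - j, by omega, ?_⟩
    unfold vtx
    split_ifs <;>
      simp only [Subtype.mk.injEq, Prod.mk.injEq, Fin.ext_iff, Fin.val_mk] <;> omega
  · by_cases h1 : (i:ℕ) = 1
    · by_cases hj0 : (j:ℕ) = 0
      · refine ⟨k, by omega, ?_⟩
        unfold vtx
        split_ifs <;>
          simp only [Subtype.mk.injEq, Prod.mk.injEq, Fin.ext_iff, Fin.val_mk] <;> omega
      · refine ⟨3*k - 4 + j, by omega, ?_⟩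
        unfold vtx
        split_ifs <;>
          simp only [Subtype.mk.injEq, Prod.mk.injEq, Fin.ext_iff, Fin.val_mk] <;> omega
    · -- i ≥ 2, so j ≤ 1
      by_cases hj0 : (j:ℕ) = 0
      · refine ⟨k - 1 + i, by omega, ?_⟩
        unfold vtx
        split_ifs <;>
          simp only [Subtype.mk.injEq, Prod.mk.injEq, Fin.ext_iff, Fin.val_mk] <;> omega
      · refine ⟨3*k - 2 - i, by omega, ?_⟩
        unfold vtx
        split_ifs <;>
          simp only [Subtype.mk.injEq, Prod.mk.injEq, Fin.ext_iff, Fin.val_mk] <;> omega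

/-- the transpose automorphism -/
def tr (k : ℕ) : GG k ≃g GG k where
  toFun v := ⟨(v.1.2, v.1.1), Or.symm v.2⟩
  invFun v := ⟨(v.1.2, v.1.1), Or.symm v.2⟩
  left_inv v := rfl
  right_inv v := rfl
  map_rel_iff' := by
    intro u v
    show (grid k k).Adj (u.1.2, u.1.1) (v.1.2, v.1.1) ↔ (grid k k).Adj u.1 v.1
    show (_:ℤ).natAbs + (_:ℤ).natAbs = 1 ↔ (_:ℤ).natAbs + (_:ℤ).natAbs = 1
    dsimp only
    omega

def tau (k x : ℕ) : ℕ := if x ≤ 2*k-2 then 2*k-2-x else 6*k-6-x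

lemma tr_vtx (hk : 3 ≤ k) (x : ℕ) (hx : x ≤ 4*k-5) :
    (tr k) (vtx hk x) = vtx hk (tau k x) := by
  have key : ∀ v : SS k, ((tr k v : SS k) : Fin k × Fin k) = ((v : Fin k × Fin k).2, (v : Fin k × Fin k).1) :=
    fun _ => rfl
  apply Subtype.ext
  rw [key]
  unfold vtx tau
  split_ifs <;> dsimp only <;>
    simp only [Prod.mk.injEq, Fin.ext_iff, Fin.val_mk, and_true, true_and] <;>
    omega

/-! ### Segment bookkeeping framework -/

inductive Seg where
  | arc : ℕ → ℕ → Seg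
  | chan : ℕ → Seg

def SegMem (hk : 3 ≤ k) : Seg → Sym2 (SS k) → Prop
  | .arc lo hi, e => ∃ i, lo ≤ i ∧ i < hi ∧ e = gedge hk i
  | .chan x, e => e = cedge hk x

def SegOK (k : ℕ) : Seg → Prop
  | .arc _ hi => hi ≤ 4*k-5
  | .chan x => x ≤ 2*k-2 ∧ x ≠ k-1

def SegDisj (k : ℕ) : Seg → Seg → Prop
  | .arc l1 h1, .arc l2 h2 => h1 ≤ l2 ∨ h2 ≤ l1
  | .arc lo hi, .chan x => x ≠ 2*k-2 ∨ hi ≤ 2*k-2 ∨ 2*k-2 < lo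
  | .chan x, .arc lo hi => x ≠ 2*k-2 ∨ hi ≤ 2*k-2 ∨ 2*k-2 < lo
  | .chan x, .chan y => x ≠ y

lemma seg_clash (hk : 3 ≤ k) {s t : Seg} {e : Sym2 (SS k)}
    (hs : SegOK k s) (ht : SegOK k t) (hd : SegDisj k s t)
    (h1 : SegMem hk s e) (h2 : SegMem hk t e) : False := by
  match s, t with
  | .arc l1 u1, .arc l2 u2 =>
    obtain ⟨i, hi1, hi2, rfl⟩ := h1
    obtain ⟨j, hj1, hj2, hej⟩ := h2
    have hs' : u1 ≤ 4*k-5 := hs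
    have ht' : u2 ≤ 4*k-5 := ht
    have hd' : u1 ≤ l2 ∨ u2 ≤ l1 := hd
    have := gedge_inj hk (by omega) (by omega) hej
    omega
  | .arc lo hi, .chan x =>
    obtain ⟨i, hi1, hi2, rfl⟩ := h1
    have h2' : cedge hk x = gedge hk i := (h2 : (gedge hk i : Sym2 (SS k)) = cedge hk x).symm
    have hs' : hi ≤ 4*k-5 := hs
    obtain ⟨htx, htne⟩ := (ht : x ≤ 2*k-2 ∧ x ≠ k-1)
    have := cedge_eq_gedge hk htx htne (by omega) h2'
    have hd' : x ≠ 2*k-2 ∨ hi ≤ 2*k-2 ∨ 2*k-2 < lo := hd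
    omega
  | .chan x, .arc lo hi =>
    obtain ⟨i, hi1, hi2, rfl⟩ := h2
    have h1' : cedge hk x = gedge hk i := (h1 : (gedge hk i : Sym2 (SS k)) = cedge hk x).symm
    have ht' : hi ≤ 4*k-5 := ht
    obtain ⟨hsx, hsne⟩ := (hs : x ≤ 2*k-2 ∧ x ≠ k-1)
    have := cedge_eq_gedge hk hsx hsne (by omega) h1'
    have hd' : x ≠ 2*k-2 ∨ hi ≤ 2*k-2 ∨ 2*k-2 < lo := hd
    omega
  | .chan x, .chan y =>
    obtain ⟨hsx, hsne⟩ := (hs : x ≤ 2*k-2 ∧ x ≠ k-1)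
    obtain ⟨htx, htne⟩ := (ht : y ≤ 2*k-2 ∧ y ≠ k-1)
    have h12 : cedge hk x = cedge hk y := by rw [← h1, ← h2]
    have := cedge_inj hk hsx htx h12
    exact (hd : x ≠ y) this

structure SWalk (hk : 3 ≤ k) (x y : ℕ) : Type where
  w : (GG k).Walk (vtx hk x) (vtx hk y)
  segs : List Seg
  ok : ∀ s ∈ segs, SegOK k s
  spec : ∀ e ∈ w.edges, ∃ s ∈ segs, SegMem hk s e

def sArc (hk : 3 ≤ k) (x y : ℕ) (hx : x ≤ 4*k-5) (hy : y ≤ 4*k-5) : SWalk hk x y where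
  w := biArc hk x y hx hy
  segs := [.arc (min x y) (max x y)]
  ok := by intro s hs; simp at hs; subst hs; exact (by omega : max x y ≤ 4*k-5)
  spec := by
    intro e he
    exact ⟨.arc (min x y) (max x y), by simp, mem_biArc hk hx hy e he⟩

def sChan (hk : 3 ≤ k) (x t : ℕ) (hx : x ≤ 2*k-2) (hne : x ≠ k-1) (ht : bet k x = t) :
    SWalk hk x t where
  w := (chanW hk x hx hne).copy rfl (by rw [ht])
  segs := [.chan x]
  ok := by intro s hs; simp at hs; subst hs; exact ⟨hx, hne⟩
  spec := by
    intro e he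
    rw [Walk.edges_copy] at he
    exact ⟨.chan x, by simp, mem_chanW hk hx hne e he⟩

def SWalk.rev {hk : 3 ≤ k} {x y : ℕ} (s : SWalk hk x y) : SWalk hk y x where
  w := s.w.reverse
  segs := s.segs
  ok := s.ok
  spec := by
    intro e he
    rw [Walk.edges_reverse, List.mem_reverse] at he
    exact s.spec e he

def SWalk.comp {hk : 3 ≤ k} {x y z : ℕ} (s : SWalk hk x y) (t : SWalk hk y z) : SWalk hk x z where
  w := s.w.append t.w
  segs := s.segs ++ t.segs
  ok := by
    intro u hu
    rcases List.mem_append.1 hu with h | h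
    exacts [s.ok u h, t.ok u h]
  spec := by
    intro e he
    rcases List.mem_append.1 (by rwa [Walk.edges_append] at he) with h | h
    · obtain ⟨u, hu, hm⟩ := s.spec e h
      exact ⟨u, List.mem_append.2 (Or.inl hu), hm⟩
    · obtain ⟨u, hu, hm⟩ := t.spec e h
      exact ⟨u, List.mem_append.2 (Or.inr hu), hm⟩

lemma SWalk.disj {hk : 3 ≤ k} {a b c d : ℕ} (s1 : SWalk hk a b) (s2 : SWalk hk c d)
    (h : ∀ s ∈ s1.segs, ∀ t ∈ s2.segs, SegDisj k s t) :
    s1.w.edges.Disjoint s2.w.edges := by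
  intro e he1 he2
  obtain ⟨s, hs, hm1⟩ := s1.spec e he1
  obtain ⟨t, ht, hm2⟩ := s2.spec e he2
  exact seg_clash hk (s1.ok s hs) (s2.ok t ht) (h s hs t ht) hm1 hm2

abbrev EDW (hk : 3 ≤ k) (a b c d : ℕ) : Prop :=
  ∃ (w1 : (GG k).Walk (vtx hk a) (vtx hk b)) (w2 : (GG k).Walk (vtx hk c) (vtx hk d)),
    w1.edges.Disjoint w2.edges

lemma C3e (hk : 3 ≤ k) {a b c d : ℕ} (h1 : a < c) (h2 : c < b) (h3 : b < d) (h4 : d ≤ 4*k-5)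
    (hc : c = k-1) (hb : b ≤ 3*k-4) (hbb : 2*k-1 ≤ b) (hd : 3*k-2 ≤ d) : EDW hk a b c d := by
  subst hc
  refine ⟨((sArc hk a (k-2) (by omega) (by omega)).comp
      ((sChan hk (k-2) (3*k-3) (by omega) (by omega) (by unfold bet; split_ifs <;> omega)).comp
        (sArc hk (3*k-3) b (by omega) (by omega)))).w,
    ((sArc hk (k-1) k (by omega) (by omega)).comp
      ((sChan hk k (3*k-3) (by omega) (by omega) (by unfold bet; split_ifs <;> omega)).comp
        (sArc hk (3*k-3) d (by omega) (by omega)))).w,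
    SWalk.disj _ _ ?_⟩
  intro s hs t ht
  simp only [SWalk.comp, sArc, sChan, List.mem_append, List.mem_cons, List.not_mem_nil,
    or_false] at hs ht
  rcases hs with rfl | rfl | rfl <;> rcases ht with rfl | rfl | rfl <;>
    simp only [SegDisj] <;> omega

lemma C1x (hk : 3 ≤ k) {a b c d : ℕ} (h1 : a < c) (h2 : c < b) (h3 : b < d) (hd2 : d ≤ 2*k-2)
    (ha : a ≠ k-1) (hb : b ≠ k-1) : EDW hk a b c d := by
  refine ⟨((sChan hk a (bet k a) (by omega) ha rfl).comp
      ((sArc hk (bet k a) (bet k b) (by unfold bet; split_ifs <;> omega)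
          (by unfold bet; split_ifs <;> omega)).comp
        ((sChan hk b (bet k b) (by omega) hb rfl).rev))).w,
    (sArc hk c d (by omega) (by omega)).w, SWalk.disj _ _ ?_⟩
  intro s hs t ht
  simp only [SWalk.comp, sArc, sChan, SWalk.rev, List.mem_append, List.mem_cons,
    List.not_mem_nil, or_false] at hs ht
  rcases hs with rfl | rfl | rfl <;> rcases ht with rfl <;>
    simp only [SegDisj, bet] <;> first
      | omega
      | (split_ifs <;> omega)

lemma C1a (hk : 3 ≤ k) {a b c d : ℕ} (h1 : a < c) (h2 : c < b) (h3 : b < d) (hd2 : d ≤ 2*k-2)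
    (hc : c ≠ k-1) (hd : d ≠ k-1) : EDW hk a b c d := by
  refine ⟨(sArc hk a b (by omega) (by omega)).w,
    ((sChan hk c (bet k c) (by omega) hc rfl).comp
      ((sArc hk (bet k c) (bet k d) (by unfold bet; split_ifs <;> omega)
          (by unfold bet; split_ifs <;> omega)).comp
        ((sChan hk d (bet k d) (by omega) hd rfl).rev))).w, SWalk.disj _ _ ?_⟩
  intro s hs t ht
  simp only [SWalk.comp, sArc, sChan, SWalk.rev, List.mem_append, List.mem_cons,
    List.not_mem_nil, or_false] at hs ht
  rcases hs with rfl <;> rcases ht with rfl | rfl | rfl <;>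
    simp only [SegDisj, bet] <;> first
      | omega
      | (split_ifs <;> omega)

lemma C2a (hk : 3 ≤ k) {a b c d : ℕ} (h1 : a < c) (h2 : c < b) (h3 : b < d) (h4 : d ≤ 4*k-5)
    (hb2 : b ≤ 2*k-2) (hd2 : 2*k-1 ≤ d) (hc : c ≠ k-1) : EDW hk a b c d := by
  refine ⟨(sArc hk a b (by omega) (by omega)).w,
    ((sChan hk c (bet k c) (by omega) hc rfl).comp
      (sArc hk (bet k c) d (by unfold bet; split_ifs <;> omega) (by omega))).w,
    SWalk.disj _ _ ?_⟩
  intro s hs t ht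
  simp only [SWalk.comp, sArc, sChan, List.mem_append, List.mem_cons,
    List.not_mem_nil, or_false] at hs ht
  rcases hs with rfl <;> rcases ht with rfl | rfl <;>
    simp only [SegDisj, bet] <;> first
      | omega
      | (split_ifs <;> omega)

lemma C2b (hk : 3 ≤ k) {a b c d : ℕ} (h1 : a < c) (h2 : c < b) (h3 : b < d) (h4 : d ≤ 4*k-5)
    (hb2 : b ≤ 2*k-2) (hc : c = k-1) (hd : 3*k-3 ≤ d) (hb : k+1 ≤ b) : EDW hk a b c d := by
  subst hc
  refine ⟨((sArc hk a (k-2) (by omega) (by omega)).comp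
      ((sChan hk (k-2) (3*k-3) (by omega) (by omega) (by unfold bet; split_ifs <;> omega)).comp
        ((sArc hk (3*k-3) (4*k-3-b) (by omega) (by omega)).comp
          ((sChan hk b (4*k-3-b) (by omega) (by omega) (by unfold bet; split_ifs <;> omega)).rev)))).w,
    ((sArc hk (k-1) k (by omega) (by omega)).comp
      ((sChan hk k (3*k-3) (by omega) (by omega) (by unfold bet; split_ifs <;> omega)).comp
        (sArc hk (3*k-3) d (by omega) (by omega)))).w, SWalk.disj _ _ ?_⟩
  intro s hs t ht
  simp only [SWalk.comp, sArc, sChan, SWalk.rev, List.mem_append, List.mem_cons,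
    List.not_mem_nil, or_false] at hs ht
  rcases hs with rfl | rfl | rfl | rfl <;> rcases ht with rfl | rfl | rfl <;>
    simp only [SegDisj, bet] <;> first
      | omega
      | (split_ifs <;> omega)

lemma C2c (hk : 3 ≤ k) {a b c d : ℕ} (h1 : a < c) (h2 : c < b) (h3 : b < d) (h4 : d ≤ 4*k-5)
    (hc : c = k-1) (hd : 3*k-3 ≤ d) (hb : b = k) : EDW hk a b c d := by
  subst hc; subst b
  refine ⟨((sArc hk a (k-2) (by omega) (by omega)).comp
      ((sChan hk (k-2) (3*k-3) (by omega) (by omega) (by unfold bet; split_ifs <;> omega)).comp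
        ((sChan hk k (3*k-3) (by omega) (by omega) (by unfold bet; split_ifs <;> omega)).rev))).w,
    (sArc hk (k-1) d (by omega) (by omega)).w, SWalk.disj _ _ ?_⟩
  intro s hs t ht
  simp only [SWalk.comp, sArc, sChan, SWalk.rev, List.mem_append, List.mem_cons,
    List.not_mem_nil, or_false] at hs ht
  rcases hs with rfl | rfl | rfl <;> rcases ht with rfl <;>
    simp only [SegDisj, bet] <;> first
      | omega
      | (split_ifs <;> omega)

lemma C2d (hk : 3 ≤ k) {a b c d : ℕ} (h1 : a < c) (h2 : c < b) (h3 : b < d) (h4 : d ≤ 4*k-5)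
    (hb2 : b ≤ 2*k-2) (hc : c = k-1) (hd2 : 2*k-1 ≤ d) (hd3 : d ≤ 3*k-4) (ha : a ≤ k-3) :
    EDW hk a b c d := by
  subst hc
  refine ⟨((sChan hk a (4*k-5-a) (by omega) (by omega) (by unfold bet; split_ifs <;> omega)).comp
      ((sArc hk (4*k-5-a) (3*k-3) (by omega) (by omega)).comp
        (((sChan hk k (3*k-3) (by omega) (by omega) (by unfold bet; split_ifs <;> omega)).rev).comp
          (sArc hk k b (by omega) (by omega))))).w,
    ((sArc hk (k-1) (k-2) (by omega) (by omega)).comp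
      ((sChan hk (k-2) (3*k-3) (by omega) (by omega) (by unfold bet; split_ifs <;> omega)).comp
        (sArc hk (3*k-3) d (by omega) (by omega)))).w, SWalk.disj _ _ ?_⟩
  intro s hs t ht
  simp only [SWalk.comp, sArc, sChan, SWalk.rev, List.mem_append, List.mem_cons,
    List.not_mem_nil, or_false] at hs ht
  rcases hs with rfl | rfl | rfl | rfl <;> rcases ht with rfl | rfl | rfl <;>
    simp only [SegDisj, bet] <;> first
      | omega
      | (split_ifs <;> omega)

lemma C2e (hk : 3 ≤ k) {a b c d : ℕ} (h1 : a < c) (h2 : c < b) (h3 : b < d) (h4 : d ≤ 4*k-5)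
    (hb2 : b ≤ 2*k-2) (hc : c = k-1) (hd2 : 2*k-1 ≤ d) (hd3 : d ≤ 3*k-4) (ha : a = k-2) :
    EDW hk a b c d := by
  subst hc; subst ha
  refine ⟨((sChan hk (k-2) (3*k-3) (by omega) (by omega) (by unfold bet; split_ifs <;> omega)).comp
      (((sChan hk k (3*k-3) (by omega) (by omega) (by unfold bet; split_ifs <;> omega)).rev).comp
        (sArc hk k b (by omega) (by omega)))).w,
    ((sArc hk (k-1) (k-3) (by omega) (by omega)).comp
      ((sChan hk (k-3) (3*k-2) (by omega) (by omega) (by unfold bet; split_ifs <;> omega)).comp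
        (sArc hk (3*k-2) d (by omega) (by omega)))).w, SWalk.disj _ _ ?_⟩
  intro s hs t ht
  simp only [SWalk.comp, sArc, sChan, SWalk.rev, List.mem_append, List.mem_cons,
    List.not_mem_nil, or_false] at hs ht
  rcases hs with rfl | rfl | rfl <;> rcases ht with rfl | rfl | rfl <;>
    simp only [SegDisj, bet] <;> first
      | omega
      | (split_ifs <;> omega)

lemma C3aP (hk : 3 ≤ k) {a b c d r : ℕ} (h1 : a < c) (h2 : c < b) (h3 : b < d) (h4 : d ≤ 4*k-5)
    (hr : bet k r = b) (hr2 : r ≤ 2*k-2) (hr3 : r ≠ k-1)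
    (hc2 : c ≤ 2*k-2) (hb2 : 2*k-1 ≤ b) (hc : c ≠ k-1) (hbc : bet k c ≠ b) : EDW hk a b c d := by
  refine ⟨((sArc hk a r (by omega) (by omega)).comp
      (sChan hk r b hr2 hr3 hr)).w,
    ((sChan hk c (bet k c) (by omega) hc rfl).comp
      (sArc hk (bet k c) d (by unfold bet; split_ifs <;> omega) (by omega))).w,
    SWalk.disj _ _ ?_⟩
  intro s hs t ht
  simp only [SWalk.comp, sArc, sChan, List.mem_append, List.mem_cons,
    List.not_mem_nil, or_false] at hs ht
  unfold bet at hr hbc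
  rcases hs with rfl | rfl <;> rcases ht with rfl | rfl <;>
    simp only [SegDisj, bet] <;> first
      | (split_ifs at * <;> omega)
      | omega

lemma C3b1 (hk : 3 ≤ k) {a b c d : ℕ} (h1 : a < c) (h2 : c < b) (h3 : b < d) (h4 : d ≤ 4*k-5)
    (hc2 : c ≤ 2*k-2) (hb2 : 2*k-1 ≤ b) (hc : c ≠ k-1) (hc3 : c ≠ 2*k-2) (hm : c+1 ≠ k-1)
    (hbc : bet k c = b) : EDW hk a b c d := by
  refine ⟨((sArc hk a c (by omega) (by omega)).comp
      (sChan hk c b (by omega) hc hbc)).w,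
    ((sArc hk c (c+1) (by omega) (by omega)).comp
      ((sChan hk (c+1) (bet k (c+1)) (by omega) hm rfl).comp
        (sArc hk (bet k (c+1)) d (by unfold bet; split_ifs <;> omega) (by omega)))).w,
    SWalk.disj _ _ ?_⟩
  intro s hs t ht
  simp only [SWalk.comp, sArc, sChan, List.mem_append, List.mem_cons,
    List.not_mem_nil, or_false] at hs ht
  unfold bet at hbc
  rcases hs with rfl | rfl <;> rcases ht with rfl | rfl | rfl <;>
    simp only [SegDisj, bet] <;> first
      | (split_ifs at * <;> omega)
      | omega

lemma C3b2 (hk : 3 ≤ k) {a b c d : ℕ} (h1 : a < c) (h2 : c < b) (h3 : b < d) (h4 : d ≤ 4*k-5)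
    (hb2 : 2*k-1 ≤ b) (hcv : c = k-2) (hbc : bet k c = b) : EDW hk a b c d := by
  subst hcv
  have hb : b = 3*k-3 := by unfold bet at hbc; split_ifs at hbc <;> omega
  subst hb
  refine ⟨((sArc hk a (k-2) (by omega) (by omega)).comp
      (sChan hk (k-2) (3*k-3) (by omega) (by omega) (by unfold bet; split_ifs <;> omega))).w,
    ((sArc hk (k-2) k (by omega) (by omega)).comp
      ((sChan hk k (3*k-3) (by omega) (by omega) (by unfold bet; split_ifs <;> omega)).comp
        (sArc hk (3*k-3) d (by omega) (by omega)))).w,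
    SWalk.disj _ _ ?_⟩
  intro s hs t ht
  simp only [SWalk.comp, sArc, sChan, List.mem_append, List.mem_cons,
    List.not_mem_nil, or_false] at hs ht
  rcases hs with rfl | rfl <;> rcases ht with rfl | rfl | rfl <;>
    simp only [SegDisj, bet] <;> first
      | omega
      | (split_ifs <;> omega)

lemma C3c (hk : 3 ≤ k) {a b c d : ℕ} (h1 : a < c) (h2 : c < b) (h3 : b < d) (h4 : d ≤ 4*k-5)
    (hc : c = k-1) (hb3 : 3*k-3 ≤ b) : EDW hk a b c d := by
  subst hc
  refine ⟨((sArc hk a (4*k-5-b) (by omega) (by omega)).comp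
      (sChan hk (4*k-5-b) b (by omega) (by omega) (by unfold bet; split_ifs <;> omega))).w,
    ((sArc hk (k-1) k (by omega) (by omega)).comp
      ((sChan hk k (3*k-3) (by omega) (by omega) (by unfold bet; split_ifs <;> omega)).comp
        (sArc hk (3*k-3) d (by omega) (by omega)))).w,
    SWalk.disj _ _ ?_⟩
  intro s hs t ht
  simp only [SWalk.comp, sArc, sChan, List.mem_append, List.mem_cons,
    List.not_mem_nil, or_false] at hs ht
  rcases hs with rfl | rfl <;> rcases ht with rfl | rfl | rfl <;>
    simp only [SegDisj, bet] <;> first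
      | omega
      | (split_ifs <;> omega)

lemma C3d (hk : 3 ≤ k) {a b c d : ℕ} (h1 : a < c) (h2 : c < b) (h3 : b < d) (h4 : d ≤ 4*k-5)
    (hc : c = k-1) (hb2 : 2*k-1 ≤ b) (hb3 : b ≤ 3*k-4) (hd2 : d ≤ 3*k-3) : EDW hk a b c d := by
  subst hc
  refine ⟨((sChan hk a (4*k-5-a) (by omega) (by omega) (by unfold bet; split_ifs <;> omega)).comp
      (sArc hk (4*k-5-a) b (by omega) (by omega))).w,
    ((sArc hk (k-1) (4*k-3-d) (by omega) (by omega)).comp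
      (sChan hk (4*k-3-d) d (by omega) (by omega) (by unfold bet; split_ifs <;> omega))).w,
    SWalk.disj _ _ ?_⟩
  intro s hs t ht
  simp only [SWalk.comp, sArc, sChan, List.mem_append, List.mem_cons,
    List.not_mem_nil, or_false] at hs ht
  rcases hs with rfl | rfl <;> rcases ht with rfl | rfl <;>
    simp only [SegDisj, bet] <;> first
      | omega
      | (split_ifs <;> omega)

lemma C3swap (hk : 3 ≤ k) {a b c d : ℕ} (h4 : d ≤ 4*k-5)
    (ha : a ≤ k-2) (hcc : k ≤ c) (hc2 : c ≤ 2*k-2) (hb : 2*k-1 ≤ b) (hb3 : b ≤ 3*k-3)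
    (hd : 3*k-3 ≤ d) : EDW hk a b c d := by
  refine ⟨((sArc hk a (k-2) (by omega) (by omega)).comp
      ((sChan hk (k-2) (3*k-3) (by omega) (by omega) (by unfold bet; split_ifs <;> omega)).comp
        (sArc hk (3*k-3) b (by omega) (by omega)))).w,
    ((sArc hk c k (by omega) (by omega)).comp
      ((sChan hk k (3*k-3) (by omega) (by omega) (by unfold bet; split_ifs <;> omega)).comp
        (sArc hk (3*k-3) d (by omega) (by omega)))).w,
    SWalk.disj _ _ ?_⟩
  intro s hs t ht
  simp only [SWalk.comp, sArc, sChan, List.mem_append, List.mem_cons,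
    List.not_mem_nil, or_false] at hs ht
  rcases hs with rfl | rfl | rfl <;> rcases ht with rfl | rfl | rfl <;>
    simp only [SegDisj, bet] <;> first
      | omega
      | (split_ifs <;> omega)

lemma C4P (hk : 3 ≤ k) {a b c d r : ℕ} (h1 : a < c) (h2 : c < b) (h3 : b < d) (h4 : d ≤ 4*k-5)
    (hr : bet k r = b) (hr2 : r ≤ 2*k-2) (hr3 : r ≠ k-1)
    (ha2 : a ≤ 2*k-2) (hc2 : 2*k-1 ≤ c) : EDW hk a b c d := by
  refine ⟨((sArc hk a r (by omega) (by omega)).comp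
      (sChan hk r b hr2 hr3 hr)).w,
    (sArc hk c d (by omega) (by omega)).w, SWalk.disj _ _ ?_⟩
  intro s hs t ht
  simp only [SWalk.comp, sArc, sChan, List.mem_append, List.mem_cons,
    List.not_mem_nil, or_false] at hs ht
  unfold bet at hr
  rcases hs with rfl | rfl <;> rcases ht with rfl <;>
    simp only [SegDisj, bet] <;> first
      | (split_ifs at * <;> omega)
      | omega

lemma C5P (hk : 3 ≤ k) {a b c d rc rd : ℕ} (h1 : a < c) (h2 : c < b) (h3 : b < d) (h4 : d ≤ 4*k-5)
    (hrc : bet k rc = c) (hrc2 : rc ≤ 2*k-2) (hrc3 : rc ≠ k-1)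
    (hrd : bet k rd = d) (hrd2 : rd ≤ 2*k-2) (hrd3 : rd ≠ k-1)
    (ha2 : 2*k-1 ≤ a) : EDW hk a b c d := by
  refine ⟨(sArc hk a b (by omega) (by omega)).w,
    (((sChan hk rc c hrc2 hrc3 hrc).rev).comp
      ((sArc hk rc rd (by omega) (by omega)).comp
        (sChan hk rd d hrd2 hrd3 hrd))).w, SWalk.disj _ _ ?_⟩
  intro s hs t ht
  simp only [SWalk.comp, sArc, sChan, SWalk.rev, List.mem_append, List.mem_cons,
    List.not_mem_nil, or_false] at hs ht
  unfold bet at hrc hrd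
  rcases hs with rfl <;> rcases ht with rfl | rfl | rfl <;>
    simp only [SegDisj, bet] <;> first
      | (split_ifs at * <;> omega)
      | omega

lemma cross_core (hk : 3 ≤ k) {a b c d : ℕ} (h1 : a < c) (h2 : c < b) (h3 : b < d)
    (h4 : d ≤ 4*k-5)
    (hres : ¬(c = 2*k-2 ∧ b = 2*k-1) ∨ (a ≤ k-2 ∧ 3*k-3 ≤ d)) : EDW hk a b c d := by
  by_cases hd2 : d ≤ 2*k-2
  · by_cases hc : c = k-1
    · exact C1x hk h1 h2 h3 hd2 (by omega) (by omega)
    · by_cases hdd : d = k-1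
      · exact C1x hk h1 h2 h3 hd2 (by omega) (by omega)
      · exact C1a hk h1 h2 h3 hd2 hc hdd
  · by_cases hb2 : b ≤ 2*k-2
    · -- C2
      by_cases hc : c = k-1
      · by_cases hd3 : 3*k-3 ≤ d
        · by_cases hbk : b = k
          · exact C2c hk h1 h2 h3 h4 hc hd3 hbk
          · exact C2b hk h1 h2 h3 h4 hb2 hc hd3 (by omega)
        · by_cases ha3 : a = k-2
          · exact C2e hk h1 h2 h3 h4 hb2 hc (by omega) (by omega) ha3
          · exact C2d hk h1 h2 h3 h4 hb2 hc (by omega) (by omega) (by omega)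
      · exact C2a hk h1 h2 h3 h4 hb2 (by omega) hc
    · by_cases hc2 : c ≤ 2*k-2
      · -- C3
        by_cases hc : c = k-1
        · by_cases hb3 : 3*k-3 ≤ b
          · exact C3c hk h1 h2 h3 h4 hc hb3
          · by_cases hd3 : d ≤ 3*k-3
            · exact C3d hk h1 h2 h3 h4 hc (by omega) (by omega) hd3
            · exact C3e hk h1 h2 h3 h4 hc (by omega) (by omega) (by omega)
        · by_cases hbc : bet k c = b
          · by_cases hc3 : c = 2*k-2
            · -- residual; hres gives the swap conditions
              have hb5 : b = 2*k-1 := by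
                subst hc3; unfold bet at hbc; split_ifs at hbc <;> omega
              have hres' : a ≤ k-2 ∧ 3*k-3 ≤ d := by tauto
              exact C3swap hk h4 hres'.1 (by omega) hc2 (by omega) (by omega) hres'.2
            · by_cases hm : c+1 = k-1
              · exact C3b2 hk h1 h2 h3 h4 (by omega) (by omega) hbc
              · exact C3b1 hk h1 h2 h3 h4 hc2 (by omega) hc hc3 hm hbc
          · by_cases hb3 : 3*k-3 ≤ b
            · exact C3aP hk h1 h2 h3 h4
                (show bet k (4*k-5-b) = b by unfold bet; split_ifs <;> omega)
                (by omega) (by omega) hc2 (by omega) hc hbc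
            · exact C3aP hk h1 h2 h3 h4
                (show bet k (4*k-3-b) = b by unfold bet; split_ifs <;> omega)
                (by omega) (by omega) hc2 (by omega) hc hbc
      · by_cases ha2 : a ≤ 2*k-2
        · -- C4
          by_cases hb3 : 3*k-3 ≤ b
          · exact C4P hk h1 h2 h3 h4
              (show bet k (4*k-5-b) = b by unfold bet; split_ifs <;> omega)
              (by omega) (by omega) ha2 (by omega)
          · exact C4P hk h1 h2 h3 h4
              (show bet k (4*k-3-b) = b by unfold bet; split_ifs <;> omega)
              (by omega) (by omega) ha2 (by omega)
        · -- C5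
          by_cases hc3 : 3*k-3 ≤ c <;> by_cases hd3 : 3*k-3 ≤ d
          · exact C5P hk h1 h2 h3 h4
              (show bet k (4*k-5-c) = c by unfold bet; split_ifs <;> omega) (by omega) (by omega)
              (show bet k (4*k-5-d) = d by unfold bet; split_ifs <;> omega) (by omega) (by omega)
              (by omega)
          · exact C5P hk h1 h2 h3 h4
              (show bet k (4*k-5-c) = c by unfold bet; split_ifs <;> omega) (by omega) (by omega)
              (show bet k (4*k-3-d) = d by unfold bet; split_ifs <;> omega) (by omega) (by omega)
              (by omega)
          · exact C5P hk h1 h2 h3 h4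
              (show bet k (4*k-3-c) = c by unfold bet; split_ifs <;> omega) (by omega) (by omega)
              (show bet k (4*k-5-d) = d by unfold bet; split_ifs <;> omega) (by omega) (by omega)
              (by omega)
          · exact C5P hk h1 h2 h3 h4
              (show bet k (4*k-3-c) = c by unfold bet; split_ifs <;> omega) (by omega) (by omega)
              (show bet k (4*k-3-d) = d by unfold bet; split_ifs <;> omega) (by omega) (by omega)
              (by omega)

lemma map_disjoint {α : Type*} (f : SS k → α) (hf : Function.Injective f)
    {l1 l2 : List (Sym2 (SS k))} (h : l1.Disjoint l2) :
    (l1.map (Sym2.map f)).Disjoint (l2.map (Sym2.map f)) := by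
  intro e he1 he2
  obtain ⟨e1, he1', rfl⟩ := List.mem_map.1 he1
  obtain ⟨e2, he2', heq⟩ := List.mem_map.1 he2
  have : e2 = e1 := Sym2.map.injective hf heq
  subst this
  exact h he1' he2'

lemma cross_full (hk : 3 ≤ k) {a b c d : ℕ} (h1 : a < c) (h2 : c < b) (h3 : b < d)
    (h4 : d ≤ 4*k-5) : EDW hk a b c d := by
  by_cases hres : ¬(c = 2*k-2 ∧ b = 2*k-1) ∨ (a ≤ k-2 ∧ 3*k-3 ≤ d)
  · exact cross_core hk h1 h2 h3 h4 hres
  · push_neg at hres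
    obtain ⟨⟨hc3, hb5⟩, hres2⟩ := hres
    -- transpose: apply cross_core to (0, 6k-6-d, 2k-2-a, 4k-5)
    obtain ⟨w1', w2', hd'⟩ := cross_core hk (a := 0) (b := 6*k-6-d) (c := 2*k-2-a) (d := 4*k-5)
      (by omega) (by omega) (by omega) (by omega)
      (Or.inl (by intro ⟨x1, x2⟩; exact absurd (hres2 (by omega)) (by omega)))
    -- map through the transpose automorphism
    refine ⟨((w2'.map (tr k).toHom).copy ?e1 ?e2), ((w1'.map (tr k).toHom).copy ?e3 ?e4), ?_⟩
    case e1 => show (tr k) (vtx hk _) = _; rw [tr_vtx hk _ (by omega)]; congr 1; unfold tau; split_ifs <;> omega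
    case e2 => show (tr k) (vtx hk _) = _; rw [tr_vtx hk _ (by omega)]; congr 1; unfold tau; split_ifs <;> omega
    case e3 => show (tr k) (vtx hk _) = _; rw [tr_vtx hk _ (by omega)]; congr 1; unfold tau; split_ifs <;> omega
    case e4 => show (tr k) (vtx hk _) = _; rw [tr_vtx hk _ (by omega)]; congr 1; unfold tau; split_ifs <;> omega
    rw [Walk.edges_copy, Walk.edges_copy, Walk.edges_map, Walk.edges_map]
    have hinj : Function.Injective (((tr k).toHom : GG k →g GG k) : SS k → SS k) :=
      fun x y hxy => (tr k).injective hxy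
    exact map_disjoint _ hinj (fun e he1 he2 => hd' he2 he1)

lemma two_arcs (hk : 3 ≤ k) {a b c d : ℕ} (ha : a ≤ 4*k-5) (hb : b ≤ 4*k-5) (hc : c ≤ 4*k-5)
    (hd : d ≤ 4*k-5) (h : max a b ≤ min c d ∨ max c d ≤ min a b) : EDW hk a b c d := by
  refine ⟨(sArc hk a b ha hb).w, (sArc hk c d hc hd).w, SWalk.disj _ _ ?_⟩
  intro s hs t ht
  simp only [sArc, List.mem_cons, List.not_mem_nil, or_false] at hs ht
  subst hs; subst ht
  simp only [SegDisj]; omega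

lemma outer_inner (hk : 3 ≤ k) {a b c d : ℕ} (ha : a ≤ 4*k-5) (hb : b ≤ 4*k-5) (hc : c ≤ 4*k-5)
    (hd : d ≤ 4*k-5) (h1 : a ≤ min c d) (h2 : max c d ≤ b) : EDW hk a b c d := by
  refine ⟨((sArc hk a 0 ha (by omega)).comp
      ((sChan hk 0 (4*k-5) (by omega) (by omega) (by unfold bet; split_ifs <;> omega)).comp
        (sArc hk (4*k-5) b (by omega) hb))).w,
    (sArc hk c d hc hd).w, SWalk.disj _ _ ?_⟩
  intro s hs t ht
  simp only [SWalk.comp, sArc, sChan, List.mem_append, List.mem_cons,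
    List.not_mem_nil, or_false] at hs ht
  rcases hs with rfl | rfl | rfl <;> rcases ht with rfl <;>
    simp only [SegDisj] <;> omega

lemma route1 (hk : 3 ≤ k) {a b c d : ℕ} (hab : a ≤ b) (hcd : c ≤ d) (hb : b ≤ 4*k-5)
    (hd : d ≤ 4*k-5) : EDW hk a b c d := by
  by_cases hbc : b ≤ c
  · exact two_arcs hk (by omega) hb (by omega) hd (by omega)
  · by_cases hda : d ≤ a
    · exact two_arcs hk (by omega) hb (by omega) hd (by omega)
    · by_cases hn1 : a ≤ c ∧ d ≤ b
      · exact outer_inner hk (by omega) hb (by omega) hd (by omega) (by omega)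
      · by_cases hn2 : c ≤ a ∧ b ≤ d
        · obtain ⟨w2, w1, hdisj⟩ := outer_inner hk (a := c) (b := d) (c := a) (d := b)
            (by omega) hd (by omega) hb (by omega) (by omega)
          exact ⟨w1, w2, fun e he1 he2 => hdisj he2 he1⟩
        · by_cases hac : a < c
          · exact cross_full hk (by omega) (by omega) (by omega) hd
          · obtain ⟨w2, w1, hdisj⟩ := cross_full hk (a := c) (b := d) (c := a) (d := b)
              (by omega) (by omega) (by omega) hb
            exact ⟨w1, w2, fun e he1 he2 => hdisj he2 he1⟩

lemma route (hk : 3 ≤ k) {a b c d : ℕ} (ha : a ≤ 4*k-5) (hb : b ≤ 4*k-5) (hc : c ≤ 4*k-5)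
    (hd : d ≤ 4*k-5) : EDW hk a b c d := by
  rcases le_total a b with hab | hab <;> rcases le_total c d with hcd | hcd
  · exact route1 hk hab hcd hb hd
  · obtain ⟨w1, w2, hdisj⟩ := route1 hk hab hcd hb hc
    exact ⟨w1, w2.reverse, by
      rw [Walk.edges_reverse]
      exact fun e he1 he2 => hdisj he1 (List.mem_reverse.1 he2)⟩
  · obtain ⟨w1, w2, hdisj⟩ := route1 hk hab hcd ha hd
    exact ⟨w1.reverse, w2, by
      rw [Walk.edges_reverse]
      exact fun e he1 he2 => hdisj (List.mem_reverse.1 he1) he2⟩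
  · obtain ⟨w1, w2, hdisj⟩ := route1 hk hab hcd ha hc
    exact ⟨w1.reverse, w2.reverse, by
      rw [Walk.edges_reverse, Walk.edges_reverse]
      exact fun e he1 he2 => hdisj (List.mem_reverse.1 he1) (List.mem_reverse.1 he2)⟩

lemma mainW2L (hk : 3 ≤ k) : Weakly2Linked (GG k) := by
  intro u1 v1 u2 v2
  obtain ⟨a, ha, rfl⟩ := exists_pos hk u1
  obtain ⟨b, hb, rfl⟩ := exists_pos hk v1
  obtain ⟨c, hc, rfl⟩ := exists_pos hk u2
  obtain ⟨d, hd, rfl⟩ := exists_pos hk v2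
  obtain ⟨w1, w2, hdisj⟩ := route hk ha hb hc hd
  exact ⟨w1.bypass, w2.bypass, w1.bypass_isPath, w2.bypass_isPath,
    fun e he1 he2 => hdisj (w1.edges_bypass_subset he1) (w2.edges_bypass_subset he2)⟩


/-- for `k ≥ 3`, the subgraph of `Pk □ Pk` induced by the union of the
first two rows and first two columns is weakly 2-linked. -/
theorem firstTwoRowsCols_weakly2Linked (k : ℕ) (hk : 3 ≤ k) :
    Weakly2Linked ((grid k k).induce {v : Fin k × Fin k | v.1.val ≤ 1 ∨ v.2.val ≤ 1}) := by
  exact mainW2L hk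
end

section
/- Let Q0 be the 3×3 grid with the edges of the bottom row A removed, let b = (2,3) be the middle vertex of the right column, and let c = (1,1). Suppose T is a set of at most four distinct vertices of Q0 all lying in the top two rows (disjoint from A) with c ∉ T. Then for every s ∈ T there exist an s–b path in Q0 and pairwise edge-disjoint paths in Q0 from the remaining terminals of T to (not necessarily distinct) vertices of A, all these paths being pairwise edge-disjoint. -/
open SimpleGraph

/-- Vertices of the 3×3 grid. -/
abbrev V33 := Fin 3 × Fin 3

/-- Bottom row `A(3)` of the 3×3 grid (0-indexed: first coordinate = 2). -/
def A3 : Set V33 := {v | v.1 = 2}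

/-- `Q0`: the 3×3 grid with the two edges of the bottom row removed. -/
def Q0 : SimpleGraph V33 :=
  (grid 3 3).deleteEdges {s(((2, 0) : V33), ((2, 1) : V33)), s(((2, 1) : V33), ((2, 2) : V33))}

/-- The middle vertex of the right column. -/
def b0 : V33 := (1, 2)

/-- `Escapes T s`: there is an `s–b0` path in `Q0` together with mating paths from the
remaining terminals of `T` into the bottom row `A(3)`, all pairwise edge-disjoint. -/
def Escapes (T : Finset V33) (s : V33) : Prop :=
  ∃ (p : Q0.Walk s b0), p.IsPath ∧
    ∃ (a : V33 → V33) (q : (t : V33) → Q0.Walk t (a t)),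
      (∀ t ∈ T.erase s, a t ∈ A3 ∧ (q t).IsPath ∧ p.edges.Disjoint (q t).edges) ∧
      ∀ t ∈ T.erase s, ∀ t' ∈ T.erase s, t ≠ t' → (q t).edges.Disjoint (q t').edges

/- ### Auxiliary infrastructure -/

instance gridAdjDec : DecidableRel (grid 3 3).Adj := fun _ _ => by
  unfold grid; exact inferInstanceAs (Decidable (_ = 1))

instance q0AdjDec : DecidableRel Q0.Adj := fun u v =>
  decidable_of_iff ((grid 3 3).Adj u v ∧
    ¬(s(u,v) = s(((2,0):V33),((2,1):V33)) ∨ s(u,v) = s(((2,1):V33),((2,2):V33))))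
    (by rw [Q0, deleteEdges_adj]; rfl)

instance listDisjDec (l1 l2 : List (Sym2 V33)) : Decidable (l1.Disjoint l2) :=
  inferInstanceAs (Decidable (∀ a ∈ l1, a ∉ l2))

/-- Extend a walk by one step on the left (arguments ordered for easy elaboration). -/
def step (u : V33) {v w : V33} (p : Q0.Walk v w) (h : Q0.Adj u v) : Q0.Walk u w :=
  Walk.cons h p

/-- The trivial walk. -/
def endW (v : V33) : Q0.Walk v v := Walk.nil

/-- The five possible terminal positions. -/
def S5 : Finset V33 := {(0,1),(0,2),(1,0),(1,1),(1,2)}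

/-- Target assignment supported on three designated terminals. -/
def afun (t1 t2 t3 A1 A2 A3' : V33) : V33 → V33 :=
  fun t => if t = t1 then A1 else if t = t2 then A2 else if t = t3 then A3' else t

/-- Walk assignment supported on three designated terminals. -/
def qfun {t1 t2 t3 A1 A2 A3' : V33}
    (w1 : Q0.Walk t1 A1) (w2 : Q0.Walk t2 A2) (w3 : Q0.Walk t3 A3') :
    (t : V33) → Q0.Walk t (afun t1 t2 t3 A1 A2 A3' t) := fun t =>
  if h : t = t1 then by subst h; simpa [afun] using w1
  else if h2 : t = t2 then by subst h2; simp only [afun, if_neg h, if_pos rfl]; exact w2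
  else if h3 : t = t3 then by
    subst h3; simp only [afun, if_neg h, if_neg h2, if_pos rfl]; exact w3
  else by simp only [afun, if_neg h, if_neg h2, if_neg h3]; exact Walk.nil

/-- Main reduction: to establish `Escapes T s` it suffices to solve the concrete
escape problem for the three candidate terminals other than `s` and `u`, where
`u` is a candidate known not to lie in `T`. -/
lemma escapes_of (T : Finset V33) (s u : V33) (hu : u ∉ T)
    (h5 : ∀ t ∈ T, t ∈ S5)
    (p : Q0.Walk s b0) (hp : p.support.Nodup)
    (a : V33 → V33) (q : (t : V33) → Q0.Walk t (a t))
    (h1 : ∀ t ∈ (S5.erase s).erase u,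
      (a t).1 = 2 ∧ (q t).support.Nodup ∧ p.edges.Disjoint (q t).edges)
    (h2 : ∀ t ∈ (S5.erase s).erase u, ∀ t' ∈ (S5.erase s).erase u,
      t ≠ t' → (q t).edges.Disjoint (q t').edges) :
    Escapes T s := by
  have hT : ∀ t ∈ T.erase s, t ∈ (S5.erase s).erase u := by
    intro t ht
    have htT := Finset.mem_of_mem_erase ht
    exact Finset.mem_erase.mpr ⟨fun e => hu (e ▸ htT),
      Finset.mem_erase.mpr ⟨(Finset.mem_erase.mp ht).1, h5 t htT⟩⟩
  refine ⟨p, (Walk.isPath_def p).mpr hp, a, q, ?_, ?_⟩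
  · intro t ht
    obtain ⟨ha, hn, hd⟩ := h1 t (hT t ht)
    exact ⟨ha, (Walk.isPath_def (q t)).mpr hn, hd⟩
  · intro t ht t' ht' hne
    exact h2 t (hT t ht) t' (hT t' ht') hne

/-- if `T` is a set of at most four vertices of `Q0` avoiding the bottom
row and the corner `c = (1,1)`, then every terminal of `T` can be linked to `b` while
the remaining terminals escape into the bottom row, all paths pairwise edge-disjoint. -/
theorem escape_top_terminals (T : Finset V33) (hcard : T.card ≤ 4)
    (hA : ∀ t ∈ T, t ∉ A3) (hc : ((0, 0) : V33) ∉ T) :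
    ∀ s ∈ T, Escapes T s := by
  have key : ∀ t : V33, t.1 = 2 ∨ t = (0,0) ∨ t ∈ S5 := by decide
  have h5 : ∀ t ∈ T, t ∈ S5 := by
    intro t ht
    rcases key t with h | h | h
    · exact absurd h (hA t ht)
    · exact absurd (h ▸ ht) hc
    · exact h
  intro s hs
  have hs5 := h5 s hs
  have hfull : ¬ S5 ⊆ T := by
    intro hsub
    have h1 := Finset.card_le_card hsub
    have h2 : S5.card = 5 := rfl
    omega
  fin_cases hs5
  -- s = (0,1)
  · by_cases k12 : ((1,2) : V33) ∈ T
    rotate_left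
    · exact escapes_of T _ (1,2) k12 h5
        (step (0,1) (step (1,1) (endW b0) (by decide)) (by decide)) (by decide) _
        (qfun (step (1,0) (endW (2,0)) (by decide))
              (step (1,1) (endW (2,1)) (by decide))
              (step (0,2) (step (1,2) (endW (2,2)) (by decide)) (by decide)))
        (by decide) (by decide)
    by_cases k11 : ((1,1) : V33) ∈ T
    rotate_left
    · exact escapes_of T _ (1,1) k11 h5
        (step (0,1) (step (0,0) (step (1,0) (step (1,1) (endW b0) (by decide))
          (by decide)) (by decide)) (by decide)) (by decide) _
        (qfun (step (1,0) (endW (2,0)) (by decide))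
              (step (1,2) (endW (2,2)) (by decide))
              (step (0,2) (step (0,1) (step (1,1) (endW (2,1)) (by decide))
                (by decide)) (by decide)))
        (by decide) (by decide)
    by_cases k10 : ((1,0) : V33) ∈ T
    rotate_left
    · exact escapes_of T _ (1,0) k10 h5
        (step (0,1) (step (1,1) (endW b0) (by decide)) (by decide)) (by decide) _
        (qfun (step (1,1) (endW (2,1)) (by decide))
              (step (1,2) (endW (2,2)) (by decide))
              (step (0,2) (step (0,1) (step (0,0) (step (1,0) (endW (2,0))
                (by decide)) (by decide)) (by decide)) (by decide)))
        (by decide) (by decide)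
    by_cases k02 : ((0,2) : V33) ∈ T
    rotate_left
    · exact escapes_of T _ (0,2) k02 h5
        (step (0,1) (step (0,2) (endW b0) (by decide)) (by decide)) (by decide) _
        (qfun (step (1,0) (endW (2,0)) (by decide))
              (step (1,1) (endW (2,1)) (by decide))
              (step (1,2) (endW (2,2)) (by decide)))
        (by decide) (by decide)
    · exact absurd (by intro x hx; fin_cases hx <;> assumption) hfull
  -- s = (0,2)
  · by_cases k12 : ((1,2) : V33) ∈ T
    rotate_left
    · exact escapes_of T _ (1,2) k12 h5
        (step (0,2) (endW b0) (by decide)) (by decide) _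
        (qfun (step (1,0) (endW (2,0)) (by decide))
              (step (1,1) (step (1,2) (endW (2,2)) (by decide)) (by decide))
              (step (0,1) (step (1,1) (endW (2,1)) (by decide)) (by decide)))
        (by decide) (by decide)
    by_cases k11 : ((1,1) : V33) ∈ T
    rotate_left
    · exact escapes_of T _ (1,1) k11 h5
        (step (0,2) (endW b0) (by decide)) (by decide) _
        (qfun (step (1,0) (endW (2,0)) (by decide))
              (step (1,2) (endW (2,2)) (by decide))
              (step (0,1) (step (1,1) (endW (2,1)) (by decide)) (by decide)))
        (by decide) (by decide)
    by_cases k10 : ((1,0) : V33) ∈ T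
    rotate_left
    · exact escapes_of T _ (1,0) k10 h5
        (step (0,2) (endW b0) (by decide)) (by decide) _
        (qfun (step (1,2) (endW (2,2)) (by decide))
              (step (1,1) (endW (2,1)) (by decide))
              (step (0,1) (step (0,0) (step (1,0) (endW (2,0)) (by decide))
                (by decide)) (by decide)))
        (by decide) (by decide)
    by_cases k01 : ((0,1) : V33) ∈ T
    rotate_left
    · exact escapes_of T _ (0,1) k01 h5
        (step (0,2) (endW b0) (by decide)) (by decide) _
        (qfun (step (1,0) (endW (2,0)) (by decide))
              (step (1,1) (endW (2,1)) (by decide))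
              (step (1,2) (endW (2,2)) (by decide)))
        (by decide) (by decide)
    · exact absurd (by intro x hx; fin_cases hx <;> assumption) hfull
  -- s = (1,0)
  · by_cases k12 : ((1,2) : V33) ∈ T
    rotate_left
    · exact escapes_of T _ (1,2) k12 h5
        (step (1,0) (step (1,1) (endW b0) (by decide)) (by decide)) (by decide) _
        (qfun (step (1,1) (endW (2,1)) (by decide))
              (step (0,2) (step (1,2) (endW (2,2)) (by decide)) (by decide))
              (step (0,1) (step (0,0) (step (1,0) (endW (2,0)) (by decide))
                (by decide)) (by decide)))
        (by decide) (by decide)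
    by_cases k11 : ((1,1) : V33) ∈ T
    rotate_left
    · exact escapes_of T _ (1,1) k11 h5
        (step (1,0) (step (1,1) (endW b0) (by decide)) (by decide)) (by decide) _
        (qfun (step (1,2) (endW (2,2)) (by decide))
              (step (0,1) (step (1,1) (endW (2,1)) (by decide)) (by decide))
              (step (0,2) (step (0,1) (step (0,0) (step (1,0) (endW (2,0))
                (by decide)) (by decide)) (by decide)) (by decide)))
        (by decide) (by decide)
    by_cases k02 : ((0,2) : V33) ∈ T
    rotate_left
    · exact escapes_of T _ (0,2) k02 h5
        (step (1,0) (step (1,1) (endW b0) (by decide)) (by decide)) (by decide) _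
        (qfun (step (1,1) (endW (2,1)) (by decide))
              (step (1,2) (endW (2,2)) (by decide))
              (step (0,1) (step (0,0) (step (1,0) (endW (2,0)) (by decide))
                (by decide)) (by decide)))
        (by decide) (by decide)
    by_cases k01 : ((0,1) : V33) ∈ T
    rotate_left
    · exact escapes_of T _ (0,1) k01 h5
        (step (1,0) (step (1,1) (endW b0) (by decide)) (by decide)) (by decide) _
        (qfun (step (1,1) (endW (2,1)) (by decide))
              (step (1,2) (endW (2,2)) (by decide))
              (step (0,2) (step (0,1) (step (0,0) (step (1,0) (endW (2,0))
                (by decide)) (by decide)) (by decide)) (by decide)))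
        (by decide) (by decide)
    · exact absurd (by intro x hx; fin_cases hx <;> assumption) hfull
  -- s = (1,1)
  · by_cases k12 : ((1,2) : V33) ∈ T
    rotate_left
    · exact escapes_of T _ (1,2) k12 h5
        (step (1,1) (endW b0) (by decide)) (by decide) _
        (qfun (step (1,0) (endW (2,0)) (by decide))
              (step (0,1) (step (1,1) (endW (2,1)) (by decide)) (by decide))
              (step (0,2) (step (1,2) (endW (2,2)) (by decide)) (by decide)))
        (by decide) (by decide)
    by_cases k10 : ((1,0) : V33) ∈ T
    rotate_left
    · exact escapes_of T _ (1,0) k10 h5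
        (step (1,1) (endW b0) (by decide)) (by decide) _
        (qfun (step (1,2) (endW (2,2)) (by decide))
              (step (0,1) (step (1,1) (endW (2,1)) (by decide)) (by decide))
              (step (0,2) (step (0,1) (step (0,0) (step (1,0) (endW (2,0))
                (by decide)) (by decide)) (by decide)) (by decide)))
        (by decide) (by decide)
    by_cases k02 : ((0,2) : V33) ∈ T
    rotate_left
    · exact escapes_of T _ (0,2) k02 h5
        (step (1,1) (endW b0) (by decide)) (by decide) _
        (qfun (step (1,0) (endW (2,0)) (by decide))
              (step (1,2) (endW (2,2)) (by decide))
              (step (0,1) (step (1,1) (endW (2,1)) (by decide)) (by decide)))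
        (by decide) (by decide)
    by_cases k01 : ((0,1) : V33) ∈ T
    rotate_left
    · exact escapes_of T _ (0,1) k01 h5
        (step (1,1) (endW b0) (by decide)) (by decide) _
        (qfun (step (1,0) (endW (2,0)) (by decide))
              (step (1,2) (endW (2,2)) (by decide))
              (step (0,2) (step (0,1) (step (1,1) (endW (2,1)) (by decide))
                (by decide)) (by decide)))
        (by decide) (by decide)
    · exact absurd (by intro x hx; fin_cases hx <;> assumption) hfull
  -- s = (1,2)
  · by_cases k11 : ((1,1) : V33) ∈ T
    rotate_left
    · exact escapes_of T _ (1,1) k11 h5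
        (endW b0) (by decide) _
        (qfun (step (1,0) (endW (2,0)) (by decide))
              (step (0,1) (step (1,1) (endW (2,1)) (by decide)) (by decide))
              (step (0,2) (step (1,2) (endW (2,2)) (by decide)) (by decide)))
        (by decide) (by decide)
    by_cases k10 : ((1,0) : V33) ∈ T
    rotate_left
    · exact escapes_of T _ (1,0) k10 h5
        (endW b0) (by decide) _
        (qfun (step (1,1) (endW (2,1)) (by decide))
              (step (0,1) (step (0,0) (step (1,0) (endW (2,0)) (by decide))
                (by decide)) (by decide))
              (step (0,2) (step (1,2) (endW (2,2)) (by decide)) (by decide)))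
        (by decide) (by decide)
    by_cases k02 : ((0,2) : V33) ∈ T
    rotate_left
    · exact escapes_of T _ (0,2) k02 h5
        (endW b0) (by decide) _
        (qfun (step (1,0) (endW (2,0)) (by decide))
              (step (1,1) (endW (2,1)) (by decide))
              (step (0,1) (step (0,2) (step (1,2) (endW (2,2)) (by decide))
                (by decide)) (by decide)))
        (by decide) (by decide)
    by_cases k01 : ((0,1) : V33) ∈ T
    rotate_left
    · exact escapes_of T _ (0,1) k01 h5
        (endW b0) (by decide) _
        (qfun (step (1,0) (endW (2,0)) (by decide))
              (step (1,1) (endW (2,1)) (by decide))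
              (step (0,2) (step (1,2) (endW (2,2)) (by decide)) (by decide)))
        (by decide) (by decide)
    · exact absurd (by intro x hx; fin_cases hx <;> assumption) hfull
end

section
/- Let Q0 be the 3×3 grid with the edges of the bottom row A removed, b = (2,3). For the terminal set T1 = {(1,1), (2,1), (3,1)} (labelled s1=(1,1), s2=(2,1), s3=(3,1)), there is NO choice of an s3–b path in Q0 together with edge-disjoint paths from the other two terminals into A; but for s = s1 and for s = s2 such a configuration (an s–b path plus edge-disjoint mating paths from the remaining terminals of T1 into A, all pairwise edge-disjoint) exists. -/
open SimpleGraph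

/-- The exceptional terminal set `T1` (the left column). -/
def T1 : Finset V33 := {((0, 0) : V33), (1, 0), (2, 0)}

instance decAdjQ0 : DecidableRel Q0.Adj := fun u v =>
  decidable_of_iff ((((u.1 : ℤ) - v.1).natAbs + ((u.2 : ℤ) - v.2).natAbs = 1) ∧
      ¬(s(u,v) = s(((2,0):V33),((2,1):V33)) ∨ s(u,v) = s(((2,1):V33),((2,2):V33)))) (by
    rw [Q0, SimpleGraph.deleteEdges_adj]
    simp [grid, Set.mem_insert_iff])

instance decA3 : DecidablePred (· ∈ A3) := fun v => decidable_of_iff (v.1 = 2) Iff.rfl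

lemma adj20 : ∀ w : V33, Q0.Adj (2,0) w → w = (1,0) := by decide
lemma adj10 : ∀ w : V33, Q0.Adj (1,0) w → w = (0,0) ∨ w = (1,1) ∨ w = (2,0) := by decide
lemma adj00 : ∀ w : V33, Q0.Adj (0,0) w → w = (0,1) ∨ w = (1,0) := by decide

/-- The `s1 = (0,0)` escape path to `b0`. -/
def pA : Q0.Walk (0,0) b0 :=
  .cons (v := (0,1)) (by decide) (.cons (v := (0,2)) (by decide) (.cons (by decide) .nil))

/-- The `s2 = (1,0)` escape path to `b0`. -/
def pB : Q0.Walk (1,0) b0 :=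
  .cons (v := (1,1)) (by decide) (.cons (by decide) .nil)

/-- Mating path from `(1,0)` into the bottom row. -/
def w10 : Q0.Walk (1,0) (2,1) := .cons (v := (1,1)) (by decide) (.cons (by decide) .nil)

/-- Mating path from `(0,0)` into the bottom row. -/
def w00 : Q0.Walk (0,0) (2,0) := .cons (v := (1,0)) (by decide) (.cons (by decide) .nil)

def aA : V33 → V33 := fun t => if t = ((1,0):V33) then (2,1) else t

def qA : (t : V33) → Q0.Walk t (aA t) := fun t =>
  if h : t = ((1,0):V33) then by subst h; exact w10 else by unfold aA; rw [if_neg h]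

def aB : V33 → V33 := fun t => if t = ((0,0):V33) then (2,0) else t

def qB : (t : V33) → Q0.Walk t (aB t) := fun t =>
  if h : t = ((0,0):V33) then by subst h; exact w00 else by unfold aB; rw [if_neg h]

lemma escapes_A : Escapes T1 ((0, 0) : V33) := by
  refine ⟨pA, by rw [SimpleGraph.Walk.isPath_def]; decide, aA, qA, ?_, ?_⟩
  · intro t ht
    fin_cases ht
    · exact ⟨by decide,
        by exact (show w10.IsPath by rw [SimpleGraph.Walk.isPath_def]; decide),
        by rw [show qA (1,0) = w10 from rfl]; simp [pA, w10, List.disjoint_left]; decide⟩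
    · exact ⟨by decide,
        by rw [show qA (2,0) = Walk.nil from rfl]; exact Walk.IsPath.nil,
        by simp [show qA (2,0) = Walk.nil from rfl]; exact List.disjoint_nil_right _⟩
  · intro t ht t' ht' hne
    fin_cases ht <;> fin_cases ht' <;>
      first
        | exact absurd rfl hne
        | (simp [show qA (2,0) = Walk.nil from rfl]; first | exact List.disjoint_nil_right _ | exact List.disjoint_nil_left _)

lemma escapes_B : Escapes T1 ((1, 0) : V33) := by
  refine ⟨pB, by rw [SimpleGraph.Walk.isPath_def]; decide, aB, qB, ?_, ?_⟩
  · intro t ht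
    fin_cases ht
    · exact ⟨by decide,
        by exact (show w00.IsPath by rw [SimpleGraph.Walk.isPath_def]; decide),
        by rw [show qB (0,0) = w00 from rfl]; simp [pB, w00, b0, List.disjoint_left]; decide⟩
    · exact ⟨by decide,
        by rw [show qB (2,0) = Walk.nil from rfl]; exact Walk.IsPath.nil,
        by simp [show qB (2,0) = Walk.nil from rfl]; exact List.disjoint_nil_right _⟩
  · intro t ht t' ht' hne
    fin_cases ht <;> fin_cases ht' <;>
      first
        | exact absurd rfl hne
        | (simp [show qB (2,0) = Walk.nil from rfl]; first | exact List.disjoint_nil_right _ | exact List.disjoint_nil_left _)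

lemma not_escapes : ¬ Escapes T1 ((2, 0) : V33) := by
  rintro ⟨p, hp, a, q, h1, h2⟩
  obtain ⟨ha1, hq1p, hd1⟩ := h1 (1,0) (by decide)
  obtain ⟨ha2, hq2p, hd2⟩ := h1 (0,0) (by decide)
  have hpair := h2 (1,0) (by decide) (0,0) (by decide) (by decide)
  -- decompose p: first edge (2,0)→(1,0)
  obtain ⟨x, hx, p1, rfl⟩ := Walk.exists_eq_cons_of_ne (by decide : ((2,0):V33) ≠ b0) p
  obtain rfl : x = (1,0) := adj20 x hx
  obtain ⟨w, hw, p2, rfl⟩ := Walk.exists_eq_cons_of_ne (by decide : ((1,0):V33) ≠ b0) p1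
  have hwmem := adj10 w hw
  have hsup := hp.support_nodup
  simp only [Walk.support_cons, List.nodup_cons] at hsup
  have hw20 : w ≠ (2,0) := by
    rintro rfl
    exact hsup.1 (by simp [Walk.start_mem_support])
  -- first edges of p
  have e1 : s(((2,0):V33),(1,0)) ∈ (Walk.cons hx (Walk.cons hw p2)).edges := by simp
  have e2 : s(((1,0):V33),w) ∈ (Walk.cons hx (Walk.cons hw p2)).edges := by simp
  -- decompose q (1,0)
  have hne1 : ((1,0):V33) ≠ a (1,0) := by
    intro h
    have : ((1,0):V33) ∈ A3 := h ▸ ha1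
    exact absurd this (by decide)
  obtain ⟨w1, hw1, r1, hr1⟩ := Walk.exists_eq_cons_of_ne hne1 (q (1,0))
  have hw1mem := adj10 w1 hw1
  have hw1e : s(((1,0):V33),w1) ∈ (q (1,0)).edges := by rw [hr1]; simp
  have hw1a : w1 ≠ (2,0) := by
    rintro rfl
    exact hd1 e1 (Sym2.eq_swap ▸ hw1e)
  have hw1w : w1 ≠ w := by rintro rfl; exact hd1 e2 hw1e
  -- decompose q (0,0)
  have hne2 : ((0,0):V33) ≠ a (0,0) := by
    intro h
    have : ((0,0):V33) ∈ A3 := h ▸ ha2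
    exact absurd this (by decide)
  obtain ⟨z, hz, r2, hr2⟩ := Walk.exists_eq_cons_of_ne hne2 (q (0,0))
  have hzmem := adj00 z hz
  have hze : s(((0,0):V33),z) ∈ (q (0,0)).edges := by rw [hr2]; simp
  rcases hwmem with rfl | rfl | h20
  · -- p = (2,0)-(1,0)-(0,0)-...
    obtain ⟨y, hy, p3, rfl⟩ := Walk.exists_eq_cons_of_ne (by decide : ((0,0):V33) ≠ b0) p2
    have hymem := adj00 y hy
    have hy10 : y ≠ (1,0) := by
      rintro rfl
      simp only [Walk.support_cons, List.nodup_cons] at hsup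
      exact hsup.2.1 (by simp [Walk.start_mem_support])
    obtain rfl : y = (0,1) := by tauto
    have e3 : s(((0,0):V33),(0,1)) ∈
        (Walk.cons hx (Walk.cons hw (Walk.cons hy p3))).edges := by simp
    rcases hzmem with rfl | rfl
    · exact hd2 e3 hze
    · exact hd2 e2 (Sym2.eq_swap ▸ hze)
  · -- p goes to (1,1), so q(1,0) goes to (0,0)
    obtain rfl : w1 = (0,0) := by tauto
    obtain ⟨y, hy, r1', hr1'⟩ := Walk.exists_eq_cons_of_ne
      (by intro h; exact absurd (h ▸ ha1) (by decide) : ((0,0):V33) ≠ a (1,0)) r1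
    have hymem := adj00 y hy
    have hq1sup := hq1p.support_nodup
    rw [hr1, hr1'] at hq1sup
    simp only [Walk.support_cons, List.nodup_cons] at hq1sup
    have hy10 : y ≠ (1,0) := by
      rintro rfl
      exact hq1sup.1 (by simp [Walk.start_mem_support])
    obtain rfl : y = (0,1) := by tauto
    have e4 : s(((0,0):V33),(0,1)) ∈ (q (1,0)).edges := by rw [hr1, hr1']; simp
    rcases hzmem with rfl | rfl
    · exact hpair e4 hze
    · exact hpair hw1e (Sym2.eq_swap ▸ hze)
  · exact hw20 h20

/-- for `T1` the terminal `s3 = (3,1)` cannot be linked to `b` with the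
other terminals escaping into the bottom row, but `s1 = (1,1)` and `s2 = (2,1)` can. -/
theorem exceptional_T1 :
    ¬ Escapes T1 ((2, 0) : V33) ∧ Escapes T1 ((0, 0) : V33) ∧ Escapes T1 ((1, 0) : V33) := by
  exact ⟨not_escapes, escapes_A, escapes_B⟩
end

section
/- Let Q be the 3×3 grid with boundary cycle C (the 8-cycle on all vertices except the center), and let x0 = (3,3). If s1, s2, s3 are three distinct vertices of Q belonging to three distinct terminal pairs, all lying on C, and s3 does not lie on the s1–s2 path P ⊆ C through x0, then there exists a path from s3 to the center vertex (2,2) that is edge-disjoint from P. -/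
open SimpleGraph

instance : DecidableRel (grid 3 3).Adj := fun u v => by
  unfold grid; exact inferInstanceAs (Decidable (_ = 1))

private lemma helper1 {s1 s2 : V33} (p : (grid 3 3).Walk s1 s2) (a : V33)
    (hadj : (grid 3 3).Adj a ((1,1) : V33))
    (hk2 : ∀ x : V33, s(x, ((1,1) : V33)) ∉ p.edges) :
    ∃ q : (grid 3 3).Walk a ((1,1) : V33), q.IsPath ∧ p.edges.Disjoint q.edges := by
  refine ⟨Walk.cons hadj Walk.nil, ?_, ?_⟩
  · simp [Walk.cons_isPath_iff]
    exact hadj.ne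
  · intro e he hq
    simp only [Walk.edges_cons, Walk.edges_nil, List.mem_cons, List.not_mem_nil,
      or_false] at hq
    subst hq; exact hk2 _ he

private lemma helper2 {s1 s2 : V33} (p : (grid 3 3).Walk s1 s2) (a b : V33)
    (h1 : (grid 3 3).Adj a b) (h2 : (grid 3 3).Adj b ((1,1) : V33))
    (ha : a ≠ ((1,1) : V33))
    (hk1 : ∀ x : V33, s(a, x) ∉ p.edges)
    (hk2 : ∀ x : V33, s(x, ((1,1) : V33)) ∉ p.edges) :
    ∃ q : (grid 3 3).Walk a ((1,1) : V33), q.IsPath ∧ p.edges.Disjoint q.edges := by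
  refine ⟨Walk.cons h1 (Walk.cons h2 Walk.nil), ?_, ?_⟩
  · simp [Walk.cons_isPath_iff]
    exact ⟨h2.ne, h1.ne, ha⟩
  · intro e he hq
    simp only [Walk.edges_cons, Walk.edges_nil, List.mem_cons, List.not_mem_nil,
      or_false] at hq
    rcases hq with rfl | rfl
    · exact hk1 _ he
    · exact hk2 _ he

/-- if `s1, s2, s3` are distinct vertices on the boundary cycle of the
3×3 grid and `P` is the `s1–s2` arc of the boundary cycle through `x0 = (3,3)`
missing `s3`, then `s3` can be mated to the center by a path edge-disjoint from `P`. -/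
theorem mate_to_center (s1 s2 s3 : V33)
    (h12 : s1 ≠ s2) (h13 : s1 ≠ s3) (h23 : s2 ≠ s3)
    (hb1 : s1 ≠ ((1, 1) : V33)) (hb2 : s2 ≠ ((1, 1) : V33)) (hb3 : s3 ≠ ((1, 1) : V33))
    (p : (grid 3 3).Walk s1 s2) (hp : p.IsPath)
    (hcenter : ((1, 1) : V33) ∉ p.support)
    (hx0 : ((2, 2) : V33) ∈ p.support)
    (hs3 : s3 ∉ p.support) :
    ∃ q : (grid 3 3).Walk s3 ((1, 1) : V33), q.IsPath ∧ p.edges.Disjoint q.edges := by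
  have key1 : ∀ x : V33, s(s3, x) ∉ p.edges := fun x h => hs3 (p.fst_mem_support_of_mem_edges h)
  have key2 : ∀ x : V33, s(x, ((1,1) : V33)) ∉ p.edges := fun x h =>
    hcenter (p.snd_mem_support_of_mem_edges h)
  fin_cases s3
  · exact helper2 p _ ((0,1) : V33) (by decide) (by decide) (by decide) key1 key2
  · exact helper1 p _ (by decide) key2
  · exact helper2 p _ ((0,1) : V33) (by decide) (by decide) (by decide) key1 key2
  · exact helper1 p _ (by decide) key2
  · exact absurd rfl hb3
  · exact helper1 p _ (by decide) key2
  · exact helper2 p _ ((2,1) : V33) (by decide) (by decide) (by decide) key1 key2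
  · exact helper1 p _ (by decide) key2
  · exact helper2 p _ ((2,1) : V33) (by decide) (by decide) (by decide) key1 key2
end
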